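/- Suppose λ satisfies the weak hyperbolicity condition of type (n₁,n₂). If a ∈ ℂ is nonzero and there exist nonnegative reals r_j (j ≤ n₁), not all zero, and nonnegative reals s_j (n₁ < j ≤ N), not all zero, with Re(a·Σ_{j≤n₁} r_j λ_j) = 0 and Re(a·Σ_{j>n₁} s_j λ_j) = 0, then a contradiction follows; i.e., no such a, r, s exist. -/

import Mathlib

open Complex Finset

private lemma im_conj_mul (w z : ℂ) :
    ((starRingEnd ℂ) w * z).im
      = ‖w‖ * ‖z‖ * Real.sin (z.arg - w.arg) := by
  rw [Real.sin_sub]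
  have hw1 := Complex.norm_mul_sin_arg w
  have hw2 := Complex.norm_mul_cos_arg w
  have hz1 := Complex.norm_mul_sin_arg z
  have hz2 := Complex.norm_mul_cos_arg z
  simp only [Complex.mul_im, Complex.conj_re, Complex.conj_im]
  rw [← hw1, ← hw2, ← hz1, ← hz2]
  ring

theorem no_common_imaginary_direction (n₁ n₂ N : ℕ) (hN : N = n₁ + n₂)
    (hn₁ : 1 ≤ n₁) (hn₂ : 1 ≤ n₂)
    (lam : Fin N → ℂ) (hne : ∀ j, lam j ≠ 0)
    (hwh : ∀ i j : Fin N, (i : ℕ) < n₁ → n₁ ≤ (j : ℕ) →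
      0 ≤ (lam i).arg ∧ (lam i).arg < (lam j).arg ∧ (lam j).arg < Real.pi)
    (a : ℂ) (ha : a ≠ 0)
    (r s : Fin N → ℝ) (hr : ∀ j, 0 ≤ r j) (hs : ∀ j, 0 ≤ s j)
    (hrnz : ∃ j : Fin N, (j : ℕ) < n₁ ∧ r j ≠ 0)
    (hsnz : ∃ j : Fin N, n₁ ≤ (j : ℕ) ∧ s j ≠ 0)
    (h1 : (a * ∑ j ∈ Finset.univ.filter (fun j : Fin N => (j : ℕ) < n₁),
      (r j : ℂ) * lam j).re = 0)
    (h2 : (a * ∑ j ∈ Finset.univ.filter (fun j : Fin N => n₁ ≤ (j : ℕ)),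
      (s j : ℂ) * lam j).re = 0) :
    False := by
  obtain ⟨i₀, hi₀, hri₀⟩ := hrnz
  obtain ⟨j₀, hj₀, hsj₀⟩ := hsnz
  set T1 : Finset (Fin N) := Finset.univ.filter (fun j : Fin N => (j : ℕ) < n₁) with hT1
  set T2 : Finset (Fin N) := Finset.univ.filter (fun j : Fin N => n₁ ≤ (j : ℕ)) with hT2
  have hi₀m : i₀ ∈ T1 := by simp [hT1, hi₀]
  have hj₀m : j₀ ∈ T2 := by simp [hT2, hj₀]
  have hT2ne : T2.Nonempty := ⟨j₀, hj₀m⟩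
  -- minimal argument in the second group
  have hAne : ((T2.image (fun j => (lam j).arg))).Nonempty := hT2ne.image _
  set γ : ℝ := (T2.image (fun j => (lam j).arg)).min' hAne with hγ
  obtain ⟨jm, hjm, hjmeq⟩ := Finset.mem_image.mp ((T2.image (fun j => (lam j).arg)).min'_mem hAne)
  have hjmγ : (lam jm).arg = γ := by rw [hγ]; exact hjmeq
  have hjm' : n₁ ≤ (jm : ℕ) := by simpa [hT2] using hjm
  have hγle : ∀ j ∈ T2, γ ≤ (lam j).arg := fun j hj =>
    Finset.min'_le _ _ (Finset.mem_image_of_mem _ hj)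
  -- basic arg facts
  have harg1 : ∀ i ∈ T1, 0 ≤ (lam i).arg ∧ (lam i).arg < γ := by
    intro i hi
    have hi' : (i : ℕ) < n₁ := by simpa [hT1] using hi
    have := hwh i jm hi' hjm'
    exact ⟨this.1, by rw [← hjmγ]; exact this.2.1⟩
  have harg2 : ∀ j ∈ T2, 0 < (lam j).arg ∧ (lam j).arg < Real.pi := by
    intro j hj
    have hj' : n₁ ≤ (j : ℕ) := by simpa [hT2] using hj
    have := hwh i₀ j hi₀ hj'
    exact ⟨lt_of_le_of_lt this.1 this.2.1, this.2.2⟩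
  have hγpos : 0 < γ := by rw [← hjmγ]; exact (harg2 jm hjm).1
  have hγlt : γ < Real.pi := by rw [← hjmγ]; exact (harg2 jm hjm).2
  set μ : ℂ := (starRingEnd ℂ) (lam jm) with hμ
  have habs : ∀ j : Fin N, 0 < ‖lam j‖ := fun j => norm_pos_iff.mpr (hne j)
  have hg1 : ∀ i ∈ T1, (μ * lam i).im < 0 := by
    intro i hi
    rw [hμ, im_conj_mul, hjmγ]
    have h := harg1 i hi
    have hs1 : Real.sin ((lam i).arg - γ) < 0 :=
      Real.sin_neg_of_neg_of_neg_pi_lt (by linarith [h.2]) (by linarith [h.1, hγlt])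
    have := mul_pos (habs jm) (habs i)
    nlinarith
  have hg2 : ∀ j ∈ T2, 0 ≤ (μ * lam j).im := by
    intro j hj
    rw [hμ, im_conj_mul, hjmγ]
    have h := harg2 j hj
    have := hγle j hj
    have hs1 : 0 ≤ Real.sin ((lam j).arg - γ) :=
      Real.sin_nonneg_of_nonneg_of_le_pi (by linarith) (by linarith [hγpos, h.2])
    positivity
  have him1 : ∀ i ∈ T1, 0 ≤ (lam i).im := by
    intro i hi
    have h := harg1 i hi
    rw [← Complex.norm_mul_sin_arg]
    have : 0 ≤ Real.sin (lam i).arg :=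
      Real.sin_nonneg_of_nonneg_of_le_pi h.1 (by linarith [h.2, hγlt])
    positivity
  have him2 : ∀ j ∈ T2, 0 < (lam j).im := by
    intro j hj
    have h := harg2 j hj
    rw [← Complex.norm_mul_sin_arg]
    exact mul_pos (habs j) (Real.sin_pos_of_pos_of_lt_pi h.1 h.2)
  -- the two sums
  set S1 : ℂ := ∑ j ∈ T1, (r j : ℂ) * lam j with hS1
  set S2 : ℂ := ∑ j ∈ T2, (s j : ℂ) * lam j with hS2
  have hcoeim : ∀ (c : ℝ) (z : ℂ), ((c : ℂ) * z).im = c * z.im := by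
    intro c z; simp [Complex.mul_im]
  have hgS1 : (μ * S1).im < 0 := by
    have he : (μ * S1).im = ∑ j ∈ T1, r j * (μ * lam j).im := by
      rw [hS1, Finset.mul_sum, Complex.im_sum]
      refine Finset.sum_congr rfl fun j _ => ?_
      rw [show μ * ((r j : ℂ) * lam j) = (r j : ℂ) * (μ * lam j) by ring, hcoeim]
    rw [he]
    have := Finset.sum_lt_sum (f := fun j => r j * (μ * lam j).im) (g := fun _ => (0:ℝ))
      (s := T1)
      (fun i hi => mul_nonpos_of_nonneg_of_nonpos (hr i) (le_of_lt (hg1 i hi)))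
      ⟨i₀, hi₀m, mul_neg_of_pos_of_neg ((hr i₀).lt_of_ne (Ne.symm hri₀)) (hg1 i₀ hi₀m)⟩
    simpa using this
  have hgS2 : 0 ≤ (μ * S2).im := by
    have he : (μ * S2).im = ∑ j ∈ T2, s j * (μ * lam j).im := by
      rw [hS2, Finset.mul_sum, Complex.im_sum]
      refine Finset.sum_congr rfl fun j _ => ?_
      rw [show μ * ((s j : ℂ) * lam j) = (s j : ℂ) * (μ * lam j) by ring, hcoeim]
    rw [he]
    exact Finset.sum_nonneg fun j hj => mul_nonneg (hs j) (hg2 j hj)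
  have himS1 : 0 ≤ S1.im := by
    rw [hS1, Complex.im_sum]
    refine Finset.sum_nonneg fun j hj => ?_
    rw [hcoeim]; exact mul_nonneg (hr j) (him1 j hj)
  have himS2 : 0 < S2.im := by
    rw [hS2, Complex.im_sum]
    have := Finset.sum_lt_sum (f := fun _ => (0:ℝ)) (g := fun j => ((s j : ℂ) * lam j).im)
      (s := T2)
      (fun j hj => by
        show (0:ℝ) ≤ ((s j : ℂ) * lam j).im
        rw [hcoeim]
        exact mul_nonneg (hs j) (le_of_lt (him2 j hj)))
      ⟨j₀, hj₀m, by
        show (0:ℝ) < ((s j₀ : ℂ) * lam j₀).im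
        rw [hcoeim]
        exact mul_pos ((hs j₀).lt_of_ne (Ne.symm hsj₀)) (him2 j₀ hj₀m)⟩
    simpa using this
  have hS1ne : S1 ≠ 0 := by
    intro h
    rw [h, mul_zero] at hgS1
    exact absurd hgS1 (by simp)
  have hu0 : (a * S1).im ≠ 0 := by
    intro h
    exact mul_ne_zero ha hS1ne (Complex.ext (by simpa using h1) (by simpa using h))
  have haS1 : a * S1 = ((a * S1).im : ℂ) * Complex.I := by
    apply Complex.ext <;> simp [h1]
  have haS2 : a * S2 = ((a * S2).im : ℂ) * Complex.I := by
    apply Complex.ext <;> simp [h2]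
  set u : ℝ := (a * S1).im
  set v : ℝ := (a * S2).im
  have h3 : (u : ℂ) * S2 = (v : ℂ) * S1 := by
    have hz : a * ((u : ℂ) * S2 - (v : ℂ) * S1) = 0 := by
      have e : a * ((u : ℂ) * S2 - (v : ℂ) * S1)
          = (u : ℂ) * (a * S2) - (v : ℂ) * (a * S1) := by ring
      rw [e, haS1, haS2]; ring
    have h4 := (mul_eq_zero.mp hz).resolve_left ha
    linear_combination h4
  have hkey : S2 = ((v / u : ℝ) : ℂ) * S1 := by
    have huc : (u : ℂ) ≠ 0 := Complex.ofReal_ne_zero.mpr hu0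
    rw [Complex.ofReal_div]
    field_simp
    linear_combination h3
  set t : ℝ := v / u with ht
  have e1 : (μ * S2).im = t * (μ * S1).im := by
    rw [hkey, show μ * (((t : ℝ) : ℂ) * S1) = ((t : ℝ) : ℂ) * (μ * S1) by ring, hcoeim]
  have e2 : S2.im = t * S1.im := by rw [hkey, hcoeim]
  have htn : t ≤ 0 := by nlinarith [hgS2, hgS1, e1]
  nlinarith [himS2, himS1, e2, htn]
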